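/- Let G be a k-regular, k-connected bipartite simple graph. If G contains ⌊k/2⌋ completely independent spanning trees, then ⌈((|V(G)|/2) − 1)/⌈k/2⌉⌉ ≤ ⌊(|V(G)|/2)/⌊k/2⌋⌋. (Note that a k-regular bipartite graph with k > 0 has the same number of vertices in each part, so |V(G)| is even.) -/

import Mathlib

open SimpleGraph

/-- `T` is a spanning tree of `G`: a subgraph of `G` (on the same vertex set) that is a tree. -/
def IsSpanningTreeOf {V : Type*} (G T : SimpleGraph V) : Prop :=
  T ≤ G ∧ T.IsTree

/-- A family of spanning trees of `G` are *completely independent* if for every pair of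
distinct vertices `x ≠ y` and distinct indices `i ≠ j`, the (unique) paths from `x` to `y`
in `T i` and `T j` share no edges, and share no vertices except `x` and `y`. -/
def AreCISTs {V : Type*} {k : ℕ} (G : SimpleGraph V) (T : Fin k → SimpleGraph V) : Prop :=
  (∀ i, IsSpanningTreeOf G (T i)) ∧
  ∀ x y : V, x ≠ y → ∀ i j : Fin k, i ≠ j →
    ∀ p : (T i).Walk x y, ∀ q : (T j).Walk x y, p.IsPath → q.IsPath →
      (∀ e ∈ p.edges, e ∉ q.edges) ∧
      (∀ v ∈ p.support, v ∈ q.support → v = x ∨ v = y)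

/-- The `n`-dimensional hypercube: vertices are functions `Fin n → ZMod 2`, adjacent iff
they differ in exactly one coordinate. -/
def hypercube (n : ℕ) : SimpleGraph (Fin n → ZMod 2) where
  Adj x y := hammingDist x y = 1
  symm := ⟨fun x y h => (hammingDist_comm y x).trans h⟩
  loopless := ⟨fun x h => by simp [hammingDist_self] at h⟩

/-- `G` is `k`-connected: it has more than `k` vertices and remains connected after
removing any set of fewer than `k` vertices. -/
def KConnected {V : Type*} (G : SimpleGraph V) (k : ℕ) : Prop :=
  k < Nat.card V ∧
  ∀ s : Finset V, s.card < k → ((G.induce ((↑s : Set V)ᶜ))).Connected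

/-- `G` is `k`-regular: every vertex has exactly `k` neighbours. -/
def IsKRegular {V : Type*} (G : SimpleGraph V) (k : ℕ) : Prop :=
  ∀ v : V, (G.neighborSet v).ncard = k

/-- Edge-disjointness of CISTs. -/
lemma cist_edge_disjoint {V : Type*} {k : ℕ} {G : SimpleGraph V} {T : Fin k → SimpleGraph V}
    (h : AreCISTs G T) {i j : Fin k} (hij : i ≠ j) {x y : V}
    (hi : (T i).Adj x y) (hj : (T j).Adj x y) : False := by
  have hne : x ≠ y := hi.ne
  have hp : (Walk.cons hi Walk.nil).IsPath := by simp [hne]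
  have hq : (Walk.cons hj Walk.nil).IsPath := by simp [hne]
  have := (h.2 x y hne i j hij _ _ hp hq).1 s(x,y) (by simp)
  simp at this

/-- In a tree, every walk between two distinct neighbours of `v` passes through `v`. -/
lemma tree_sep {V : Type*} {T : SimpleGraph V} (hT : T.IsTree) {v a b : V} (hab : a ≠ b)
    (ha : T.Adj v a) (hb : T.Adj v b) (w : T.Walk a b) : v ∈ w.support := by
  classical
  have hp : (Walk.cons ha.symm (Walk.cons hb Walk.nil)).IsPath := by
    simp [ha.ne', hb.ne, hab]
  have huniq := (hT.existsUnique_path a b).unique w.toPath.2 hp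
  have hv : v ∈ (w.toPath : T.Walk a b).support := by
    rw [huniq]; simp
  exact w.support_toPath_subset hv

/-- A vertex cannot be internal (degree ≥ 2) in two different CISTs. -/
lemma cist_internal_disjoint {V : Type*} {k : ℕ} {G : SimpleGraph V} {T : Fin k → SimpleGraph V}
    (h : AreCISTs G T) {i j : Fin k} (hij : i ≠ j) {v a b c d : V}
    (hab : a ≠ b) (hcd : c ≠ d)
    (ha : (T i).Adj v a) (hb : (T i).Adj v b)
    (hc : (T j).Adj v c) (hd : (T j).Adj v d) : False := by
  classical
  set Ri : V → V → Prop := fun x y => ∃ w : (T i).Walk x y, v ∉ w.support with hRi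
  set Rj : V → V → Prop := fun x y => ∃ w : (T j).Walk x y, v ∉ w.support with hRj
  have RiSymm : ∀ {x y}, Ri x y → Ri y x := by
    rintro x y ⟨w, hw⟩; exact ⟨w.reverse, by simpa using hw⟩
  have RjSymm : ∀ {x y}, Rj x y → Rj y x := by
    rintro x y ⟨w, hw⟩; exact ⟨w.reverse, by simpa using hw⟩
  have RiTrans : ∀ {x y z}, Ri x y → Ri y z → Ri x z := by
    rintro x y z ⟨w1, h1⟩ ⟨w2, h2⟩
    exact ⟨w1.append w2, by simp [Walk.mem_support_append_iff, h1, h2]⟩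
  have RjTrans : ∀ {x y z}, Rj x y → Rj y z → Rj x z := by
    rintro x y z ⟨w1, h1⟩ ⟨w2, h2⟩
    exact ⟨w1.append w2, by simp [Walk.mem_support_append_iff, h1, h2]⟩
  have hSi : ∀ w : (T i).Walk a b, v ∈ w.support := tree_sep (h.1 i).2 hab ha hb
  have hSj : ∀ w : (T j).Walk c d, v ∈ w.support := tree_sep (h.1 j).2 hcd hc hd
  have hnRiab : ¬ Ri a b := by rintro ⟨w, hw⟩; exact hw (hSi w)
  have hnRjcd : ¬ Rj c d := by rintro ⟨w, hw⟩; exact hw (hSj w)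
  have final : ∀ x y : V, x ≠ v → y ≠ v → ¬ Ri x y → ¬ Rj x y → False := by
    intro x y hxv hyv hri hrj
    have hxy : x ≠ y := by
      rintro rfl
      exact hri ⟨Walk.nil, by simpa using (Ne.symm hxv)⟩
    obtain ⟨p0⟩ := ((h.1 i).2.isConnected.preconnected x y)
    obtain ⟨q0⟩ := ((h.1 j).2.isConnected.preconnected x y)
    set p := p0.toPath
    set q := q0.toPath
    have hvp : v ∈ (p : (T i).Walk x y).support := by
      by_contra hc'; exact hri ⟨p, hc'⟩
    have hvq : v ∈ (q : (T j).Walk x y).support := by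
      by_contra hc'; exact hrj ⟨q, hc'⟩
    rcases (h.2 x y hxy i j hij p q p.2 q.2).2 v hvp hvq with rfl | rfl
    · exact hxv rfl
    · exact hyv rfl
  by_cases hab' : Rj a b
  · have hz : ¬ Rj a c ∨ ¬ Rj a d := by
      by_contra hcon
      push_neg at hcon
      exact hnRjcd (RjTrans (RjSymm hcon.1) hcon.2)
    obtain ⟨z, hzj, hzi'⟩ : ∃ z : V, ¬ Rj a z ∧ (T j).Adj v z := by
      rcases hz with h1 | h1
      · exact ⟨c, h1, hc⟩
      · exact ⟨d, h1, hd⟩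
    by_cases haz : Ri a z
    · have hbz_i : ¬ Ri b z := fun hh => hnRiab (RiTrans haz (RiSymm hh))
      have hbz_j : ¬ Rj b z := fun hh => hzj (RjTrans hab' hh)
      exact final b z hb.ne' hzi'.ne' hbz_i hbz_j
    · exact final a z ha.ne' hzi'.ne' haz hzj
  · exact final a b ha.ne' hb.ne' hnRiab hab'

/-- In a bipartite graph, the sum of degrees over one side equals the number of edges. -/
lemma bip_sum {V : Type*} [Fintype V] [DecidableEq V] (A B : Finset V)
    (hdisj : ∀ v : V, ¬(v ∈ A ∧ v ∈ B)) (H : SimpleGraph V) [DecidableRel H.Adj]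
    (hb : ∀ u v : V, H.Adj u v → (u ∈ A ∧ v ∈ B) ∨ (u ∈ B ∧ v ∈ A)) :
    ∑ x ∈ A, H.degree x = H.edgeFinset.card := by
  classical
  rw [show ∑ x ∈ A, H.degree x = ∑ x ∈ A, (H.neighborFinset x).card from rfl,
    ← Finset.card_sigma]
  apply Finset.card_bij (fun p _ => s(p.1, p.2))
  · rintro ⟨x, y⟩ hp
    simp only [Finset.mem_sigma, mem_neighborFinset] at hp
    simpa [mem_edgeFinset] using hp.2
  · rintro ⟨x, y⟩ hp ⟨x', y'⟩ hp' hEq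
    simp only [Finset.mem_sigma, mem_neighborFinset] at hp hp'
    simp only [Sym2.eq_iff] at hEq
    rcases hEq with ⟨rfl, rfl⟩ | ⟨rfl, rfl⟩
    · rfl
    · exfalso
      have hyB : y ∈ B := by
        rcases hb _ _ hp.2 with ⟨_, h2⟩ | ⟨h1, _⟩
        · exact h2
        · exact absurd ⟨hp.1, h1⟩ (hdisj _)
      exact hdisj _ ⟨hp'.1, hyB⟩
  · intro e he
    rw [mem_edgeFinset] at he
    induction e with
    | _ u w =>
      have hadj : H.Adj u w := he
      rcases hb _ _ hadj with ⟨huA, hwB⟩ | ⟨huB, hwA⟩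
      · exact ⟨⟨u, w⟩, by simp [huA, hadj], rfl⟩
      · exact ⟨⟨w, u⟩, by simp [hwA, hadj.symm], Sym2.eq_swap⟩

lemma floor_half (k : ℕ) : ⌊(k : ℚ) / 2⌋ = ((k / 2 : ℕ) : ℤ) := by
  have h := Rat.floor_intCast_div_natCast (k : ℤ) 2
  push_cast at h
  rw [h]
  exact (Int.ofNat_tdiv k 2).symm

lemma ceil_half (k : ℕ) : ⌈(k : ℚ) / 2⌉ = (((k + 1) / 2 : ℕ) : ℤ) := by
  rcases Nat.even_or_odd k with ⟨a, ha⟩ | ⟨a, ha⟩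
  · subst ha
    have h1 : ((a + a : ℕ) : ℚ) / 2 = (a : ℚ) := by push_cast; ring
    rw [h1, Int.ceil_natCast]
    congr 1
    omega
  · subst ha
    have h1 : ((2 * a + 1 : ℕ) : ℚ) / 2 = 1/2 + (a : ℚ) := by push_cast; ring
    rw [h1]
    rw [show (1/2 + (a:ℚ)) = 1/2 + ((a:ℤ):ℚ) by push_cast; ring, Int.ceil_add_intCast]
    have h2 : ⌈(1:ℚ)/2⌉ = 1 := by norm_num [Int.ceil_eq_iff]
    rw [h2]
    omega

lemma final_arith (m b r t : ℕ) (hb : 0 < b) (hr : 0 < r)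
    (h1 : m ≤ 1 + b * t) (h2 : r * t ≤ m) :
    ⌈(((2 * m : ℕ) : ℚ) / 2 - 1) / (((b : ℕ) : ℤ) : ℚ)⌉ ≤
      ⌊(((2 * m : ℕ) : ℚ) / 2) / (((r : ℕ) : ℤ) : ℚ)⌋ := by
  have hm : ((2 * m : ℕ) : ℚ) / 2 = (m : ℚ) := by push_cast; ring
  rw [hm]
  have hbQ : (0:ℚ) < ((b : ℤ) : ℚ) := by exact_mod_cast hb
  have hrQ : (0:ℚ) < ((r : ℤ) : ℚ) := by exact_mod_cast hr
  refine le_trans (b := (t : ℤ)) (Int.ceil_le.2 ?_) (Int.le_floor.2 ?_)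
  · rw [div_le_iff₀ hbQ]
    push_cast
    have : (m : ℚ) ≤ 1 + b * t := by exact_mod_cast h1
    nlinarith
  · rw [le_div_iff₀ hrQ]
    push_cast
    have : (r : ℚ) * t ≤ m := by exact_mod_cast h2
    nlinarith

/-- Necessary condition for a `k`-regular, `k`-connected bipartite graph to contain
`⌊k/2⌋` completely independent spanning trees:
`⌈((|V|/2) - 1) / ⌈k/2⌉⌉ ≤ ⌊(|V|/2) / ⌊k/2⌋⌋`. -/
theorem cist_necessary_condition_bipartite {V : Type*} [Fintype V]
    (G : SimpleGraph V) (k : ℕ)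
    (X Y : Set V) (hdisj : Disjoint X Y) (hunion : X ∪ Y = Set.univ)
    (hbip : ∀ u v : V, G.Adj u v → (u ∈ X ∧ v ∈ Y) ∨ (u ∈ Y ∧ v ∈ X))
    (hreg : IsKRegular G k) (hconn : KConnected G k)
    (hcist : ∃ T : Fin (k / 2) → SimpleGraph V, AreCISTs G T) :
    ⌈((Fintype.card V : ℚ) / 2 - 1) / ((⌈(k : ℚ) / 2⌉ : ℤ) : ℚ)⌉ ≤
      ⌊((Fintype.card V : ℚ) / 2) / ((⌊(k : ℚ) / 2⌋ : ℤ) : ℚ)⌋ := by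
  classical
  rcases Nat.lt_or_ge k 2 with hk2 | hk2
  · interval_cases k
    · -- k = 0
      norm_num
    · -- k = 1
      have hG : G.Connected := by
        have hc := hconn.2 ∅ (by simp)
        refine hc.map
          (⟨Subtype.val, fun h => h⟩ :
            (G.induce ((↑(∅ : Finset V) : Set V)ᶜ)) →g G) (fun v => ?_)
        have hm : v ∈ ((↑(∅ : Finset V) : Set V)ᶜ) := by simp
        exact ⟨⟨v, hm⟩, rfl⟩
      have hV1 : 1 < Fintype.card V := by
        have := hconn.1
        rwa [Nat.card_eq_fintype_card] at this
      have hcard : Fintype.card V = 2 := by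
        obtain ⟨v⟩ : Nonempty V := Fintype.card_pos_iff.mp (by omega)
        obtain ⟨w, hw⟩ := Set.ncard_eq_one.mp (hreg v)
        have hvw : G.Adj v w := by
          have : w ∈ G.neighborSet v := by rw [hw]; exact rfl
          exact this
        have step : ∀ x y : V, G.Adj x y → (x = v ∨ x = w) → (y = v ∨ y = w) := by
          rintro x y hxy (rfl | rfl)
          · right
            have : y ∈ G.neighborSet x := hxy
            rwa [hw, Set.mem_singleton_iff] at this
          · left
            obtain ⟨z, hz⟩ := Set.ncard_eq_one.mp (hreg x)
            have hv' : v ∈ G.neighborSet x := hvw.symm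
            have hy' : y ∈ G.neighborSet x := hxy
            rw [hz, Set.mem_singleton_iff] at hv' hy'
            rw [hy', ← hv']
        have key : ∀ (x u : V), (G.Walk x u) → (x = v ∨ x = w) → (u = v ∨ u = w) := by
          intro x u p
          induction p with
          | nil => exact id
          | cons h q ih => intro hx; exact ih (step _ _ h hx)
        have hsub : (Finset.univ : Finset V) ⊆ {v, w} := by
          intro u _
          obtain ⟨p⟩ := hG.preconnected v u
          rcases key v u p (Or.inl rfl) with rfl | rfl <;> simp
        have h2 : Fintype.card V ≤ 2 :=
          calc Fintype.card V = (Finset.univ : Finset V).card := rfl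
            _ ≤ ({v, w} : Finset V).card := Finset.card_le_card hsub
            _ ≤ 2 := (Finset.card_insert_le _ _).trans (by simp)
        omega
      rw [hcard]
      norm_num [Int.floor_eq_iff, Int.ceil_eq_iff]
  · -- main case : k ≥ 2
    set r := k / 2 with hrdef
    set b := (k + 1) / 2 with hbdef
    obtain ⟨Tr, hT⟩ := hcist
    have hr : 1 ≤ r := by omega
    have hbr : b + r = k := by omega
    have hnt : Nontrivial V := by
      have := hconn.1
      rw [Nat.card_eq_fintype_card] at this
      exact Fintype.one_lt_card_iff_nontrivial.mp (by omega)
    have hTle : ∀ i, Tr i ≤ G := fun i => (hT.1 i).1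
    have htree : ∀ i, (Tr i).IsTree := fun i => (hT.1 i).2
    have hdegG : ∀ v, G.degree v = k := by
      intro v
      rw [← hreg v, SimpleGraph.degree, neighborFinset_def]
      exact (Set.ncard_eq_toFinset_card' _).symm
    -- every vertex has degree ≥ 1 in each tree
    have hdeg1 : ∀ (i) (v : V), 1 ≤ (Tr i).degree v := by
      intro i v
      obtain ⟨w, hw⟩ := exists_ne v
      obtain ⟨p⟩ := (htree i).isConnected.preconnected v w
      cases p with
      | nil => exact absurd rfl hw
      | cons h q =>
        exact (Tr i).degree_pos_iff_exists_adj v |>.mpr ⟨_, h⟩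
    -- sum of tree degrees at a vertex is at most k
    have hsumdeg : ∀ v : V, ∑ i : Fin r, (Tr i).degree v ≤ k := by
      intro v
      have hdisjN : ∀ i ∈ Finset.univ, ∀ j ∈ Finset.univ, i ≠ j →
          Disjoint ((Tr i).neighborFinset v) ((Tr j).neighborFinset v) := by
        intro i _ j _ hij
        rw [Finset.disjoint_left]
        intro w hwi hwj
        exact cist_edge_disjoint hT hij ((mem_neighborFinset _ _ _).mp hwi) ((mem_neighborFinset _ _ _).mp hwj)
      calc ∑ i : Fin r, (Tr i).degree v
          = (Finset.univ.biUnion fun i => (Tr i).neighborFinset v).card :=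
            (Finset.card_biUnion hdisjN).symm
        _ ≤ (G.neighborFinset v).card := by
            apply Finset.card_le_card
            intro w hw
            simp only [Finset.mem_biUnion, mem_neighborFinset] at hw ⊢
            obtain ⟨i, _, hi⟩ := hw
            exact hTle i hi
        _ = k := hdegG v
    -- degree upper bound in each tree
    have hdegub : ∀ (i) (v : V), (Tr i).degree v ≤ b + 1 := by
      intro i v
      have hs := hsumdeg v
      rw [← Finset.sum_erase_add _ _ (Finset.mem_univ i)] at hs
      have h2 : (Finset.univ.erase i).card • 1 ≤
          ∑ j ∈ Finset.univ.erase i, (Tr j).degree v :=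
        Finset.card_nsmul_le_sum _ _ _ (fun j _ => hdeg1 j v)
      have hcard : (Finset.univ.erase i).card = r - 1 := by
        rw [Finset.card_erase_of_mem (Finset.mem_univ i), Finset.card_univ, Fintype.card_fin]
      rw [hcard, smul_eq_mul, mul_one] at h2
      omega
    -- bipartite sides as finsets
    set A : Finset V := Finset.univ.filter (· ∈ X) with hAdef
    set B : Finset V := Finset.univ.filter (· ∈ Y) with hBdef
    have hmemA : ∀ v : V, v ∈ A ↔ v ∈ X := by intro v; simp [hAdef]
    have hmemB : ∀ v : V, v ∈ B ↔ v ∈ Y := by intro v; simp [hBdef]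
    have hABdisj : ∀ v : V, ¬(v ∈ A ∧ v ∈ B) := by
      intro v ⟨hvA, hvB⟩
      exact Set.disjoint_left.mp hdisj ((hmemA v).mp hvA) ((hmemB v).mp hvB)
    have hbipAB : ∀ u v : V, G.Adj u v → (u ∈ A ∧ v ∈ B) ∨ (u ∈ B ∧ v ∈ A) := by
      intro u v huv
      rcases hbip u v huv with ⟨h1, h2⟩ | ⟨h1, h2⟩
      · exact Or.inl ⟨(hmemA u).mpr h1, (hmemB v).mpr h2⟩
      · exact Or.inr ⟨(hmemB u).mpr h1, (hmemA v).mpr h2⟩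
    -- |A| = |B|
    have hABcard : A.card = B.card := by
      have h1 := bip_sum A B hABdisj G hbipAB
      have h2 := bip_sum B A (fun v hv => hABdisj v ⟨hv.2, hv.1⟩) G
        (fun u v huv => (hbipAB u v huv).symm)
      rw [Finset.sum_congr rfl (fun x _ => hdegG x)] at h1 h2
      rw [Finset.sum_const, smul_eq_mul] at h1 h2
      have := h1.trans h2.symm
      exact Nat.eq_of_mul_eq_mul_right (by omega) this
    set m := A.card with hmdef
    have hcardV : Fintype.card V = 2 * m := by
      have hU : (Finset.univ : Finset V) = A ∪ B := by
        ext v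
        simp only [Finset.mem_univ, true_iff, Finset.mem_union, hmemA, hmemB]
        have : v ∈ X ∪ Y := by rw [hunion]; trivial
        exact this
      have hdisjF : Disjoint A B := by
        rw [Finset.disjoint_left]
        intro a ha hb
        exact hABdisj a ⟨ha, hb⟩
      calc Fintype.card V = (Finset.univ : Finset V).card := rfl
        _ = (A ∪ B).card := by rw [hU]
        _ = A.card + B.card := Finset.card_union_of_disjoint hdisjF
        _ = 2 * m := by rw [← hABcard]; omega
    -- internal vertex sets on side A
    set I : Fin r → Finset V := fun i => A.filter (fun v => 2 ≤ (Tr i).degree v) with hIdef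
    have hIsub : ∀ i, I i ⊆ A := fun i => Finset.filter_subset _ _
    -- lower bound on each |I i|
    have hlb : ∀ i, m ≤ 1 + b * (I i).card := by
      intro i
      have hedge : (Tr i).edgeFinset.card + 1 = Fintype.card V := (htree i).card_edgeFinset
      have hsumA : ∑ x ∈ A, (Tr i).degree x = (Tr i).edgeFinset.card :=
        bip_sum A B hABdisj (Tr i)
          (fun u v huv => hbipAB u v (hTle i huv))
      have hsplit : ∑ x ∈ A, (Tr i).degree x =
          (∑ x ∈ I i, (Tr i).degree x) + ∑ x ∈ A.filter (fun v => ¬ 2 ≤ (Tr i).degree v),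
            (Tr i).degree x := by
        rw [hIdef]
        exact (Finset.sum_filter_add_sum_filter_not A _ _).symm
      have hub1 : ∑ x ∈ I i, (Tr i).degree x ≤ (I i).card * (b + 1) :=
        Finset.sum_le_card_nsmul _ _ _ (fun x _ => hdegub i x)
      have hub2 : ∑ x ∈ A.filter (fun v => ¬ 2 ≤ (Tr i).degree v), (Tr i).degree x ≤
          (A.filter (fun v => ¬ 2 ≤ (Tr i).degree v)).card * 1 := by
        apply Finset.sum_le_card_nsmul
        intro x hx
        have := (Finset.mem_filter.mp hx).2
        omega
      have hcards : (I i).card + (A.filter (fun v => ¬ 2 ≤ (Tr i).degree v)).card = m := by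
        rw [hIdef]
        exact Finset.card_filter_add_card_filter_not _
      have htot : 2 * m ≤ 1 + (∑ x ∈ A, (Tr i).degree x) := by
        rw [hsumA]
        omega
      set t := (I i).card
      set s := (A.filter (fun v => ¬ 2 ≤ (Tr i).degree v)).card
      have : 2 * m ≤ 1 + t * (b + 1) + s * 1 := by
        calc 2 * m ≤ 1 + (∑ x ∈ A, (Tr i).degree x) := htot
          _ = 1 + ((∑ x ∈ I i, (Tr i).degree x) +
              ∑ x ∈ A.filter (fun v => ¬ 2 ≤ (Tr i).degree v), (Tr i).degree x) := by
                rw [← hsplit]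
          _ ≤ 1 + (t * (b + 1) + s * 1) := by omega
          _ = 1 + t * (b + 1) + s * 1 := by omega
      have hts : t + s = m := hcards
      -- m ≤ 1 + b * t
      have hbt : t * (b + 1) = b * t + t := by ring
      rw [hbt] at this
      generalize hu : b * t = u at *
      omega
    -- the I i are pairwise disjoint
    have hIdisj : ∀ i ∈ Finset.univ, ∀ j ∈ Finset.univ, i ≠ j → Disjoint (I i) (I j) := by
      intro i _ j _ hij
      rw [Finset.disjoint_left]
      intro v hvi hvj
      have h2i : 2 ≤ (Tr i).degree v := (Finset.mem_filter.mp hvi).2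
      have h2j : 2 ≤ (Tr j).degree v := (Finset.mem_filter.mp hvj).2
      obtain ⟨a, ha, b', hb', hab⟩ := Finset.one_lt_card.mp (h2i : 1 < ((Tr i).neighborFinset v).card)
      obtain ⟨c, hc, d, hd, hcd⟩ := Finset.one_lt_card.mp (h2j : 1 < ((Tr j).neighborFinset v).card)
      exact cist_internal_disjoint hT hij hab hcd
        ((mem_neighborFinset _ _ _).mp ha) ((mem_neighborFinset _ _ _).mp hb')
        ((mem_neighborFinset _ _ _).mp hc) ((mem_neighborFinset _ _ _).mp hd)
    -- sum of |I i| is at most m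
    have hsumI : ∑ i : Fin r, (I i).card ≤ m := by
      rw [← Finset.card_biUnion hIdisj]
      apply Finset.card_le_card
      intro v hv
      simp only [Finset.mem_biUnion] at hv
      obtain ⟨i, _, hi⟩ := hv
      exact hIsub i hi
    -- pick a tree with minimal internal set
    obtain ⟨i0, _, hmin⟩ := Finset.exists_min_image Finset.univ (fun i => (I i).card)
      ⟨⟨0, by omega⟩, Finset.mem_univ _⟩
    have hrt : r * (I i0).card ≤ m := by
      calc r * (I i0).card = ∑ _i : Fin r, (I i0).card := by
            rw [Finset.sum_const, Finset.card_univ, Fintype.card_fin, smul_eq_mul]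
        _ ≤ ∑ i : Fin r, (I i).card :=
            Finset.sum_le_sum (fun i _ => hmin i (Finset.mem_univ i))
        _ ≤ m := hsumI
    rw [hcardV, ceil_half, floor_half]
    exact final_arith m b r (I i0).card (by omega) (by omega) (hlb i0) hrt
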